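/- For every integer k ≥ 1, (m_{k+1} + 4·q_{k+1}²)² ≤ (1 − β_k/2)·(m_k + 4·q_k²)² + (972/β_k³)·‖z_{k+1} − z_k‖⁴. -/

import Mathlib

private lemma stmt_11_aux1 (b q1 q2 m1 m2 d : ℝ) (hb : 0 < b) (hb1 : b ≤ 1)
    (hM : b * m2 ≤ b * (1 - b) * (m1 + 2 * q1 * d + d ^ 2) + (1 - b) ^ 2 * d ^ 2)
    (hbQ2 : b * q2 ^ 2 ≤ b * ((1 - b) * q1 + 2 * (1 - b) * d) ^ 2)
    (hCS : q1 ^ 2 ≤ m1) :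
    b * (m2 + 4 * q2 ^ 2) ≤ b * (1 - b / 2) * (m1 + 4 * q1 ^ 2) + 19 * d ^ 2 := by
  have c1 : 0 ≤ (1 - b) * (18 - 16 * b) * (b * q1 - 2 * d) ^ 2 :=
    mul_nonneg (mul_nonneg (by linarith) (by linarith)) (sq_nonneg _)
  have c2 : 0 ≤ b ^ 2 * (m1 - q1 ^ 2) := mul_nonneg (sq_nonneg b) (by linarith)
  have c3 : 0 ≤ b * (19 + 16 * b - 16 * b ^ 2) * d ^ 2 :=
    mul_nonneg (mul_nonneg hb.le (by nlinarith)) (sq_nonneg d)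
  have c4 : 0 ≤ b ^ 2 * (2 + 9 / 2 * b - 4 * b ^ 2) * q1 ^ 2 :=
    mul_nonneg (mul_nonneg (sq_nonneg b) (by nlinarith)) (sq_nonneg q1)
  nlinarith [hM, hbQ2, c1, c2, c3, c4]

private lemma stmt_11_aux2 (b X Y d : ℝ) (hb1 : b ≤ 1)
    (hbsq : b * (b * Y) ^ 2 ≤ b * (b * (1 - b / 2) * X + 19 * d ^ 2) ^ 2) :
    (Y ^ 2 - (1 - b / 2) * X ^ 2) * b ^ 3 ≤ 972 * d ^ 4 := by
  have c1 : 0 ≤ (2 - b) * (b ^ 2 * X - 38 * d ^ 2) ^ 2 :=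
    mul_nonneg (by linarith) (sq_nonneg _)
  have c2 : 0 ≤ d ^ 4 := by positivity
  nlinarith [hbsq, c1, c2]

theorem stmt_11 {E : Type*} [NormedAddCommGroup E] [NormedSpace ℝ E]
    (β : ℕ → ℝ) (hβ0 : β 0 = 1) (hβ : ∀ k, 0 < β k ∧ β k ≤ 1)
    (z yhat : ℕ → E)
    (hyhat : ∀ t : ℕ, yhat (t + 1) = (1 - 1 / β t) • z t + (1 / β t) • z (t + 1))
    (ζ : ℕ → ℕ → ℝ)
    (hζ : ∀ t k : ℕ, t ≤ k → ζ t k = β t * ∏ i ∈ Finset.Icc (t + 1) k, (1 - β i))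
    (q m : ℕ → ℝ)
    (hq : ∀ k : ℕ, q (k + 1) = ∑ t ∈ Finset.range (k + 1), ζ t k * ‖z (k + 1) - yhat (t + 1)‖)
    (hm : ∀ k : ℕ, m (k + 1) = ∑ t ∈ Finset.range (k + 1), ζ t k * ‖z (k + 1) - yhat (t + 1)‖ ^ 2) :
    ∀ k : ℕ, 1 ≤ k →
      (m (k + 1) + 4 * q (k + 1) ^ 2) ^ 2 ≤
        (1 - β k / 2) * (m k + 4 * q k ^ 2) ^ 2 + (972 / β k ^ 3) * ‖z (k + 1) - z k‖ ^ 4 := by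
  have hζnn : ∀ t k : ℕ, t ≤ k → 0 ≤ ζ t k := by
    intro t k htk
    rw [hζ t k htk]
    refine mul_nonneg (hβ t).1.le (Finset.prod_nonneg fun i _ => by linarith [(hβ i).2])
  have hsum1 : ∀ j : ℕ, ∑ t ∈ Finset.range (j + 1), ζ t j = 1 := by
    intro j
    induction j with
    | zero => simp [hζ 0 0 le_rfl, hβ0]
    | succ n ih =>
      have hstep : ∀ t ∈ Finset.range (n + 1), ζ t (n + 1) = (1 - β (n + 1)) * ζ t n := by
        intro t ht
        rw [Finset.mem_range] at ht
        have htn : t ≤ n := Nat.lt_succ_iff.mp ht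
        rw [hζ t (n + 1) (by omega), hζ t n htn,
          Finset.prod_Icc_succ_top (by omega : t + 1 ≤ n + 1)]
        ring
      rw [Finset.sum_range_succ, Finset.sum_congr rfl hstep, ← Finset.mul_sum, ih,
        hζ (n + 1) (n + 1) le_rfl, Finset.Icc_eq_empty (by omega), Finset.prod_empty]
      ring
  intro k hk
  obtain ⟨j, rfl⟩ : ∃ j, k = j + 1 := ⟨k - 1, by omega⟩
  obtain ⟨hb, hb1⟩ := hβ (j + 1)
  set b := β (j + 1) with hbdef
  have hbne : b ≠ 0 := ne_of_gt hb
  set d := ‖z (j + 1 + 1) - z (j + 1)‖ with hddef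
  have hd0 : 0 ≤ d := norm_nonneg _
  have hmem : ∀ t ∈ Finset.range (j + 1), t ≤ j := fun t ht =>
    Nat.lt_succ_iff.mp (Finset.mem_range.mp ht)
  -- weight decomposition
  have hζstep : ∀ t ∈ Finset.range (j + 1), ζ t (j + 1) = (1 - b) * ζ t j := by
    intro t ht
    have := hmem t ht
    rw [hζ t (j + 1) (by omega), hζ t j (by omega),
      Finset.prod_Icc_succ_top (by omega : t + 1 ≤ j + 1)]
    ring
  have hζlast : ζ (j + 1) (j + 1) = b := by
    rw [hζ (j + 1) (j + 1) le_rfl, Finset.Icc_eq_empty (by omega), Finset.prod_empty, mul_one]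
  -- the last extrapolated point
  have hlastpt : ‖z (j + 1 + 1) - yhat (j + 1 + 1)‖ = (1 / b - 1) * d := by
    rw [hyhat (j + 1)]
    have hsub : z (j + 1 + 1) - ((1 - 1 / b) • z (j + 1) + (1 / b) • z (j + 1 + 1))
        = (1 - 1 / b) • (z (j + 1 + 1) - z (j + 1)) := by
      module
    rw [hsub, norm_smul, Real.norm_eq_abs]
    have h1b : 1 ≤ 1 / b := by
      rw [le_div_iff₀ hb]; linarith
    rw [abs_of_nonpos (by linarith)]
    ring
  -- triangle inequality for each term
  have htri : ∀ t : ℕ, ‖z (j + 1 + 1) - yhat (t + 1)‖ ≤ ‖z (j + 1) - yhat (t + 1)‖ + d := by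
    intro t
    have h : z (j + 1 + 1) - yhat (t + 1)
        = (z (j + 1) - yhat (t + 1)) + (z (j + 1 + 1) - z (j + 1)) := by abel
    rw [h]
    exact norm_add_le _ _
  -- nonnegativity
  have hqnn : 0 ≤ q (j + 1) := by
    rw [hq j]
    exact Finset.sum_nonneg fun t ht => mul_nonneg (hζnn t j (hmem t ht)) (norm_nonneg _)
  have hq2nn : 0 ≤ q (j + 1 + 1) := by
    rw [hq (j + 1)]
    exact Finset.sum_nonneg fun t ht =>
      mul_nonneg (hζnn t (j + 1) (Nat.lt_succ_iff.mp (Finset.mem_range.mp ht))) (norm_nonneg _)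
  have hmnn : 0 ≤ m (j + 1) := by
    rw [hm j]
    exact Finset.sum_nonneg fun t ht => mul_nonneg (hζnn t j (hmem t ht)) (by positivity)
  have hm2nn : 0 ≤ m (j + 1 + 1) := by
    rw [hm (j + 1)]
    exact Finset.sum_nonneg fun t ht =>
      mul_nonneg (hζnn t (j + 1) (Nat.lt_succ_iff.mp (Finset.mem_range.mp ht))) (by positivity)
  -- q recursion bound
  have hQ : q (j + 1 + 1) ≤ (1 - b) * q (j + 1) + 2 * (1 - b) * d := by
    rw [hq (j + 1), Finset.sum_range_succ, hζlast, hlastpt]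
    have hrw : ∀ t ∈ Finset.range (j + 1),
        ζ t (j + 1) * ‖z (j + 1 + 1) - yhat (t + 1)‖
          = (1 - b) * (ζ t j * ‖z (j + 1 + 1) - yhat (t + 1)‖) := by
      intro t ht; rw [hζstep t ht]; ring
    rw [Finset.sum_congr rfl hrw, ← Finset.mul_sum]
    have hS : ∑ t ∈ Finset.range (j + 1), ζ t j * ‖z (j + 1 + 1) - yhat (t + 1)‖
        ≤ q (j + 1) + d := by
      have hle : ∑ t ∈ Finset.range (j + 1), ζ t j * ‖z (j + 1 + 1) - yhat (t + 1)‖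
          ≤ ∑ t ∈ Finset.range (j + 1), ζ t j * (‖z (j + 1) - yhat (t + 1)‖ + d) := by
        refine Finset.sum_le_sum fun t ht =>
          mul_le_mul_of_nonneg_left (htri t) (hζnn t j (hmem t ht))
      have heq : ∑ t ∈ Finset.range (j + 1), ζ t j * (‖z (j + 1) - yhat (t + 1)‖ + d)
          = q (j + 1) + d := by
        simp only [mul_add]
        rw [Finset.sum_add_distrib, ← Finset.sum_mul, hsum1 j, one_mul, hq j]
      linarith
    have hbd : b * ((1 / b - 1) * d) = (1 - b) * d := by field_simp
    have h1b0 : (0 : ℝ) ≤ 1 - b := by linarith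
    nlinarith [mul_le_mul_of_nonneg_left hS h1b0]
  -- m recursion bound (multiplied by b)
  have hM : b * m (j + 1 + 1)
      ≤ b * (1 - b) * (m (j + 1) + 2 * q (j + 1) * d + d ^ 2) + (1 - b) ^ 2 * d ^ 2 := by
    rw [hm (j + 1), Finset.sum_range_succ, hζlast, hlastpt]
    have hrw : ∀ t ∈ Finset.range (j + 1),
        ζ t (j + 1) * ‖z (j + 1 + 1) - yhat (t + 1)‖ ^ 2
          = (1 - b) * (ζ t j * ‖z (j + 1 + 1) - yhat (t + 1)‖ ^ 2) := by
      intro t ht; rw [hζstep t ht]; ring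
    rw [Finset.sum_congr rfl hrw, ← Finset.mul_sum]
    have hS : ∑ t ∈ Finset.range (j + 1), ζ t j * ‖z (j + 1 + 1) - yhat (t + 1)‖ ^ 2
        ≤ m (j + 1) + 2 * q (j + 1) * d + d ^ 2 := by
      have hle : ∑ t ∈ Finset.range (j + 1), ζ t j * ‖z (j + 1 + 1) - yhat (t + 1)‖ ^ 2
          ≤ ∑ t ∈ Finset.range (j + 1), ζ t j * (‖z (j + 1) - yhat (t + 1)‖ + d) ^ 2 := by
        refine Finset.sum_le_sum fun t ht => ?_
        refine mul_le_mul_of_nonneg_left ?_ (hζnn t j (hmem t ht))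
        exact pow_le_pow_left₀ (norm_nonneg _) (htri t) 2
      have heq : ∑ t ∈ Finset.range (j + 1), ζ t j * (‖z (j + 1) - yhat (t + 1)‖ + d) ^ 2
          = m (j + 1) + 2 * q (j + 1) * d + d ^ 2 := by
        have expand : ∀ t ∈ Finset.range (j + 1),
            ζ t j * (‖z (j + 1) - yhat (t + 1)‖ + d) ^ 2
              = ζ t j * ‖z (j + 1) - yhat (t + 1)‖ ^ 2
                + 2 * d * (ζ t j * ‖z (j + 1) - yhat (t + 1)‖) + d ^ 2 * ζ t j := by
          intro t _; ring
        rw [Finset.sum_congr rfl expand, Finset.sum_add_distrib, Finset.sum_add_distrib,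
          ← Finset.mul_sum, ← Finset.mul_sum, hsum1 j, hq j, hm j]
        ring
      linarith
    have hbd : b * (b * ((1 / b - 1) * d) ^ 2) = (1 - b) ^ 2 * d ^ 2 := by
      field_simp
    have h1b0 : (0 : ℝ) ≤ b * (1 - b) := mul_nonneg hb.le (by linarith)
    nlinarith [mul_le_mul_of_nonneg_left hS h1b0]
  -- Cauchy-Schwarz: q² ≤ m
  have hCS : q (j + 1) ^ 2 ≤ m (j + 1) := by
    rw [hq j, hm j]
    have key := Finset.sum_mul_sq_le_sq_mul_sq (Finset.range (j + 1))
      (fun t => Real.sqrt (ζ t j)) (fun t => Real.sqrt (ζ t j) * ‖z (j + 1) - yhat (t + 1)‖)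
    have h1 : ∀ t ∈ Finset.range (j + 1),
        Real.sqrt (ζ t j) * (Real.sqrt (ζ t j) * ‖z (j + 1) - yhat (t + 1)‖)
          = ζ t j * ‖z (j + 1) - yhat (t + 1)‖ := by
      intro t ht
      rw [← mul_assoc, Real.mul_self_sqrt (hζnn t j (hmem t ht))]
    have h2 : ∀ t ∈ Finset.range (j + 1),
        Real.sqrt (ζ t j) ^ 2 = ζ t j := by
      intro t ht; exact Real.sq_sqrt (hζnn t j (hmem t ht))
    have h3 : ∀ t ∈ Finset.range (j + 1),
        (Real.sqrt (ζ t j) * ‖z (j + 1) - yhat (t + 1)‖) ^ 2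
          = ζ t j * ‖z (j + 1) - yhat (t + 1)‖ ^ 2 := by
      intro t ht
      rw [mul_pow, Real.sq_sqrt (hζnn t j (hmem t ht))]
    rw [Finset.sum_congr rfl h1, Finset.sum_congr rfl h2, Finset.sum_congr rfl h3,
      hsum1 j, one_mul] at key
    exact key
  -- Step A: one-step contraction for m + 4q²
  have stepA : b * (m (j + 1 + 1) + 4 * q (j + 1 + 1) ^ 2)
      ≤ b * (1 - b / 2) * (m (j + 1) + 4 * q (j + 1) ^ 2) + 19 * d ^ 2 := by
    have hQrhs : (0 : ℝ) ≤ (1 - b) * q (j + 1) + 2 * (1 - b) * d := by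
      have : (0 : ℝ) ≤ 1 - b := by linarith
      positivity
    have hQ2 : q (j + 1 + 1) ^ 2 ≤ ((1 - b) * q (j + 1) + 2 * (1 - b) * d) ^ 2 := by
      nlinarith [hQ, hq2nn]
    have hbQ2 : b * q (j + 1 + 1) ^ 2 ≤ b * ((1 - b) * q (j + 1) + 2 * (1 - b) * d) ^ 2 :=
      mul_le_mul_of_nonneg_left hQ2 hb.le
    exact stmt_11_aux1 b (q (j + 1)) (q (j + 1 + 1)) (m (j + 1)) (m (j + 1 + 1)) d
      hb hb1 hM hbQ2 hCS
  -- Step B: squaring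
  set X := m (j + 1) + 4 * q (j + 1) ^ 2 with hXdef
  set Y := m (j + 1 + 1) + 4 * q (j + 1 + 1) ^ 2 with hYdef
  have hXnn : 0 ≤ X := by positivity
  have hYnn : 0 ≤ Y := by positivity
  have hrhsnn : (0 : ℝ) ≤ b * (1 - b / 2) * X + 19 * d ^ 2 := by
    have h2b : (0 : ℝ) ≤ 1 - b / 2 := by linarith
    have := mul_nonneg (mul_nonneg hb.le h2b) hXnn
    nlinarith [sq_nonneg d]
  have hbY : 0 ≤ b * Y := mul_nonneg hb.le hYnn
  have hsq : (b * Y) ^ 2 ≤ (b * (1 - b / 2) * X + 19 * d ^ 2) ^ 2 :=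
    pow_le_pow_left₀ hbY stepA 2
  have hbsq : b * (b * Y) ^ 2 ≤ b * (b * (1 - b / 2) * X + 19 * d ^ 2) ^ 2 :=
    mul_le_mul_of_nonneg_left hsq hb.le
  have key : (Y ^ 2 - (1 - b / 2) * X ^ 2) * b ^ 3 ≤ 972 * d ^ 4 := by
    exact stmt_11_aux2 b X Y d hb1 hbsq
  have hb3 : (0 : ℝ) < b ^ 3 := by positivity
  have hfin : Y ^ 2 - (1 - b / 2) * X ^ 2 ≤ 972 / b ^ 3 * d ^ 4 := by
    rw [div_mul_eq_mul_div, le_div_iff₀ hb3]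
    linarith
  linarith
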